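/- arXiv:1109.0635 — 2 statements merged into one kernel-verified Lean document; each statement's English description precedes it below -/
import Mathlib

section
/- Let d ≥ 1, p ∈ [d,∞) and r = p/d. If f ∈ L_{p,π}(μ^d) is such that the function J_d f is real-valued and nonnegative μ^d-almost everywhere on X^d, then D_d f ≥ 0 μ-almost everywhere on X. That is, the diagonal restriction operator D_d preserves positivity of real-valued functions. -/
open MeasureTheory Filter Topology ENNReal ProbabilityTheory

noncomputable section

namespace VonMises

variable {X : Type} [MeasurableSpace X]

/-- The `d`-fold product measure `μ^d` on the power space `X^d`. -/
abbrev pm (μ : Measure X) (d : ℕ) : Measure (Fin d → X) := Measure.pi fun _ => μ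

/-- `(E, tp)` is (a realization of) the projective tensor product
`L_{p 0}(μ) ⊗̂_π ⋯ ⊗̂_π L_{p (d-1)}(μ)`: `tp` is a continuous multilinear map
satisfying the cross-norm identity, whose range spans a dense subspace, and which has
the (isometric) universal lifting property of the projective tensor norm. -/
structure IsPTP (μ : Measure X) {d : ℕ} (p : Fin d → ℝ≥0∞) [∀ i, Fact (1 ≤ p i)]
    (E : Type) [NormedAddCommGroup E] [NormedSpace ℝ E] [CompleteSpace E]
    (tp : ContinuousMultilinearMap ℝ (fun i : Fin d => Lp ℝ (p i) μ) E) : Prop where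
  crossNorm : ∀ f : ∀ i : Fin d, Lp ℝ (p i) μ, ‖tp f‖ = ∏ i, ‖f i‖
  denseSpan : Dense (Submodule.span ℝ (Set.range fun f : ∀ i : Fin d, Lp ℝ (p i) μ => tp f) : Set E)
  lift : ∀ (F : Type) [NormedAddCommGroup F] [NormedSpace ℝ F] [CompleteSpace F]
      (g : ContinuousMultilinearMap ℝ (fun i : Fin d => Lp ℝ (p i) μ) F),
      ∃ L : E →L[ℝ] F, (∀ f, L (tp f) = g f) ∧ ‖L‖ = ‖g‖

/-- `J` realizes the canonical map from the projective tensor product into `L_q(μ^d)`,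
determined by its values on elementary tensors. -/
def IsEmbed (μ : Measure X) {d : ℕ} (p : Fin d → ℝ≥0∞) [∀ i, Fact (1 ≤ p i)]
    (q : ℝ≥0∞) [Fact (1 ≤ q)]
    {E : Type} [NormedAddCommGroup E] [NormedSpace ℝ E] [CompleteSpace E]
    (tp : ContinuousMultilinearMap ℝ (fun i : Fin d => Lp ℝ (p i) μ) E)
    (J : E →L[ℝ] Lp ℝ q (pm μ d)) : Prop :=
  ∀ f, (J (tp f) : (Fin d → X) → ℝ) =ᵐ[pm μ d] fun x => ∏ i, (f i : X → ℝ) (x i)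

/-- `D` realizes the diagonal restriction operator: the norm-one linear map sending an
elementary tensor `f_1 ⊗ ⋯ ⊗ f_d` to the pointwise product `x ↦ f_1(x)⋯f_d(x)`. -/
def IsDiag (μ : Measure X) {d : ℕ} (p : Fin d → ℝ≥0∞) [∀ i, Fact (1 ≤ p i)]
    (r : ℝ≥0∞) [Fact (1 ≤ r)]
    {E : Type} [NormedAddCommGroup E] [NormedSpace ℝ E] [CompleteSpace E]
    (tp : ContinuousMultilinearMap ℝ (fun i : Fin d => Lp ℝ (p i) μ) E)
    (D : E →L[ℝ] Lp ℝ r μ) : Prop :=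
  ‖D‖ = 1 ∧ ∀ f, (D (tp f) : X → ℝ) =ᵐ[μ] fun x => ∏ i, (f i : X → ℝ) x

/-- `W` realizes the tensor Koopman operator `V^𝐤 = V_1^{k_1} ⊗_π ⋯ ⊗_π V_d^{k_d}`,
where `V_i g = g ∘ T_i`. -/
def IsTKoop (μ : Measure X) {d : ℕ} (p : Fin d → ℝ≥0∞) [∀ i, Fact (1 ≤ p i)]
    {E : Type} [NormedAddCommGroup E] [NormedSpace ℝ E] [CompleteSpace E]
    (tp : ContinuousMultilinearMap ℝ (fun i : Fin d => Lp ℝ (p i) μ) E)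
    (T : Fin d → X → X) (k : Fin d → ℕ) (W : E →L[ℝ] E) : Prop :=
  ∀ f g : ∀ i : Fin d, Lp ℝ (p i) μ,
    (∀ i, (g i : X → ℝ) =ᵐ[μ] fun x => (f i : X → ℝ) ((T i)^[k i] x)) → W (tp f) = tp g

/-- `g = V^{*k} f`: the adjoint (transfer) operator applied to `f`, characterized by
`∫_s g dμ = ∫_{T^{-k} s} f dμ` for all measurable `s`. -/
def IsTransfer (μ : Measure X) (T : X → X) (k : ℕ) {p : ℝ≥0∞} [Fact (1 ≤ p)]
    (f g : Lp ℝ p μ) : Prop :=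
  ∀ s : Set X, MeasurableSet s → ∫ x in s, g x ∂μ = ∫ x in T^[k] ⁻¹' s, f x ∂μ

/-- `W` realizes the tensor transfer operator `V^{*𝐤} = V_1^{*k_1} ⊗_π ⋯ ⊗_π V_d^{*k_d}`. -/
def IsTTrans (μ : Measure X) {d : ℕ} (p : Fin d → ℝ≥0∞) [∀ i, Fact (1 ≤ p i)]
    {E : Type} [NormedAddCommGroup E] [NormedSpace ℝ E] [CompleteSpace E]
    (tp : ContinuousMultilinearMap ℝ (fun i : Fin d => Lp ℝ (p i) μ) E)
    (T : Fin d → X → X) (k : Fin d → ℕ) (W : E →L[ℝ] E) : Prop :=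
  ∀ f g : ∀ i : Fin d, Lp ℝ (p i) μ,
    (∀ i, IsTransfer μ (T i) (k i) (f i) (g i)) → W (tp f) = tp g

/-- The σ-algebra of `T`-invariant measurable sets. -/
def invariants (T : X → X) : MeasurableSpace X where
  MeasurableSet' s := MeasurableSet s ∧ T ⁻¹' s = s
  measurableSet_empty := ⟨MeasurableSet.empty, rfl⟩
  measurableSet_compl s hs := ⟨hs.1.compl, by rw [Set.preimage_compl, hs.2]⟩
  measurableSet_iUnion s hs :=
    ⟨MeasurableSet.iUnion fun i => (hs i).1, by
      simp only [Set.preimage_iUnion]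
      exact Set.iUnion_congr fun i => (hs i).2⟩

/-- `W` realizes `E_{inv,1} ⊗_π ⋯ ⊗_π E_{inv,d}`, the projective tensor product of the
conditional expectations with respect to the invariant σ-fields. -/
def IsTCondexpInv (μ : Measure X) {d : ℕ} (p : Fin d → ℝ≥0∞) [∀ i, Fact (1 ≤ p i)]
    {E : Type} [NormedAddCommGroup E] [NormedSpace ℝ E] [CompleteSpace E]
    (tp : ContinuousMultilinearMap ℝ (fun i : Fin d => Lp ℝ (p i) μ) E)
    (T : Fin d → X → X) (W : E →L[ℝ] E) : Prop :=
  ∀ f g : ∀ i : Fin d, Lp ℝ (p i) μ,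
    (∀ i, (g i : X → ℝ) =ᵐ[μ] μ[(f i : X → ℝ) | invariants (T i)]) → W (tp f) = tp g

/-- Exactness of a measure preserving transformation: the tail σ-field
`⋂_n T^{-n}𝓕` is trivial mod `μ`. -/
def Exact (μ : Measure X) (T : X → X) : Prop :=
  ∀ s : Set X, (∀ n : ℕ, ∃ t : Set X, MeasurableSet t ∧ s = T^[n] ⁻¹' t) →
    μ s = 0 ∨ μ s = 1

/-- A kernel of `m` variables is canonical (totally degenerate) if integrating out any
one variable gives `0` almost everywhere. -/
def Canonical (μ : Measure X) (m : ℕ) (h : (Fin m → X) → ℝ) : Prop :=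
  ∀ l : Fin m, ∀ᵐ x ∂ pm μ m, ∫ y, h (Function.update x l y) ∂μ = 0

/-- A kernel of `d` variables is symmetric if it is a.e. invariant under permutations of
its variables. -/
def Symm (μ : Measure X) (d : ℕ) (h : (Fin d → X) → ℝ) : Prop :=
  ∀ σ : Equiv.Perm (Fin d), ∀ᵐ x ∂ pm μ d, h (x ∘ σ) = h x

end VonMises

namespace VonMises

section PartitionAux


open MeasurableSpace ProbabilityTheory

variable {X : Type} [MeasurableSpace X] [CountablyGenerated X]

/-- The `n`-th finite partition as a `Finset`. -/
def part (X : Type) [MeasurableSpace X] [CountablyGenerated X] (n : ℕ) : Finset (Set X) :=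
  (finite_countablePartition X n).toFinset

lemma mem_part {n : ℕ} {B : Set X} : B ∈ part X n ↔ B ∈ countablePartition X n :=
  Set.Finite.mem_toFinset _

lemma part_meas {n : ℕ} {B : Set X} (hB : B ∈ part X n) : MeasurableSet B :=
  measurableSet_countablePartition n (mem_part.mp hB)

lemma part_disj (n : ℕ) : (↑(part X n) : Set (Set X)).PairwiseDisjoint id := by
  intro B hB B' hB' hne
  simp only [Finset.mem_coe] at hB hB'
  exact disjoint_countablePartition (mem_part.mp hB) (mem_part.mp hB') hne

lemma part_biUnion (n : ℕ) : (⋃ B ∈ part X n, B) = (Set.univ : Set X) := by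
  rw [← sUnion_countablePartition X n, Set.sUnion_eq_biUnion]
  ext x
  simp [mem_part]

variable (μ : Measure X)

/-- Averaging over the atoms of the `n`-th partition. -/
def aav (n : ℕ) (k : X → ℝ) : X → ℝ := fun x =>
  ∑ B ∈ part X n, Set.indicator B (fun _ => ((μ B).toReal)⁻¹ * ∫ y in B, k y ∂μ) x

lemma aav_apply (n : ℕ) (k : X → ℝ) (x : X) :
    aav μ n k x = ((μ (countablePartitionSet n x)).toReal)⁻¹
      * ∫ y in countablePartitionSet n x, k y ∂μ := by
  rw [aav, Finset.sum_eq_single (countablePartitionSet n x)]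
  · rw [Set.indicator_of_mem (mem_countablePartitionSet n x)]
  · intro B hB hne
    exact Set.indicator_of_notMem
      (fun hx => hne (((countablePartitionSet_eq_iff x (mem_part.mp hB)).mpr hx).symm)) _
  · intro h
    exact absurd (mem_part.mpr (countablePartitionSet_mem n x)) h

lemma aav_on (n : ℕ) (k : X → ℝ) {B : Set X} (hB : B ∈ part X n) {x : X} (hx : x ∈ B) :
    aav μ n k x = ((μ B).toReal)⁻¹ * ∫ y in B, k y ∂μ := by
  rw [aav_apply, countablePartitionSet_of_mem (mem_part.mp hB) hx]

lemma aav_measurable (n : ℕ) (k : X → ℝ) : Measurable (aav μ n k) :=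
  Finset.measurable_sum _ fun B hB => measurable_const.indicator (part_meas hB)

lemma aav_integrable [IsFiniteMeasure μ] (n : ℕ) (k : X → ℝ) : Integrable (aav μ n k) μ :=
  integrable_finset_sum _ fun B hB => (integrable_const _).indicator (part_meas hB)

lemma aav_stronglyMeasurable' (n : ℕ) (k : X → ℝ) :
    StronglyMeasurable[(countableFiltration X n : MeasurableSpace X)] (aav μ n k) := by
  have : Measurable[(countableFiltration X n : MeasurableSpace X)] (aav μ n k) :=
    Finset.measurable_sum _ fun B hB =>
      Measurable.indicator measurable_const
        (measurableSet_countableFiltration_of_mem n (mem_part.mp hB))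
  exact this.stronglyMeasurable

lemma setIntegral_aav (n : ℕ) (k : X → ℝ) [IsFiniteMeasure μ] {B : Set X} (hB : B ∈ part X n) :
    ∫ x in B, aav μ n k x ∂μ = ∫ x in B, k x ∂μ := by
  rcases eq_or_ne (μ B) 0 with h0 | h0
  · rw [Measure.restrict_eq_zero.mpr h0]
    simp
  · have ha : ((μ B).toReal) ≠ 0 := ENNReal.toReal_ne_zero.mpr ⟨h0, measure_ne_top μ B⟩
    calc ∫ x in B, aav μ n k x ∂μ
        = ∫ _x in B, (((μ B).toReal)⁻¹ * ∫ y in B, k y ∂μ) ∂μ :=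
          setIntegral_congr_fun (part_meas hB) (fun x hx => aav_on μ n k hB hx)
      _ = (μ B).toReal • (((μ B).toReal)⁻¹ * ∫ y in B, k y ∂μ) := setIntegral_const _
      _ = ∫ x in B, k x ∂μ := by
          rw [smul_eq_mul, ← mul_assoc, mul_inv_cancel₀ ha, one_mul]

lemma aav_eq_condexp [IsProbabilityMeasure μ] (n : ℕ) {k : X → ℝ} (hk : Integrable k μ) :
    aav μ n k =ᵐ[μ] μ[k | (countableFiltration X n : MeasurableSpace X)] := by
  refine ae_eq_condExp_of_forall_setIntegral_eq ((countableFiltration X).le n) hk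
      (fun t _ _ => (aav_integrable μ n k).integrableOn) (fun t ht _ => ?_)
      ((aav_stronglyMeasurable' μ n k).aestronglyMeasurable)
  obtain ⟨S, hS, rfl⟩ := (measurableSet_generateFrom_countablePartition_iff n t).mp ht
  have hSsub : ∀ B ∈ S, B ∈ part X n := fun B hB => mem_part.mpr (hS hB)
  have hmeas : ∀ B ∈ S, MeasurableSet B := fun B hB => part_meas (hSsub B hB)
  have hdisj : (↑S : Set (Set X)).PairwiseDisjoint id := by
    refine (part_disj n).subset ?_
    intro B hB
    exact Finset.mem_coe.mpr (hSsub B (Finset.mem_coe.mp hB))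
  rw [Set.sUnion_eq_biUnion, Finset.set_biUnion_coe,
      integral_biUnion_finset S hmeas hdisj (fun B hB => (aav_integrable μ n k).integrableOn),
      integral_biUnion_finset S hmeas hdisj (fun B hB => hk.integrableOn)]
  exact Finset.sum_congr rfl fun B hB => setIntegral_aav μ n k (hSsub B hB)

lemma aav_tendsto [IsProbabilityMeasure μ] {k : X → ℝ} (hk : Integrable k μ) :
    ∀ᵐ x ∂μ, Tendsto (fun n => aav μ n k x) atTop (𝓝 (k x)) := by
  have hkk' : k =ᵐ[μ] hk.1.mk k := hk.1.ae_eq_mk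
  have hk'i : Integrable (hk.1.mk k) μ := hk.congr hkk'
  have hsm' : StronglyMeasurable[⨆ n, (countableFiltration X) n] (hk.1.mk k) := by
    rw [iSup_countableFiltration]
    exact hk.1.stronglyMeasurable_mk
  have hmart := hk'i.tendsto_ae_condExp hsm'
  have hcond : ∀ n : ℕ, aav μ n k =ᵐ[μ] μ[hk.1.mk k | (countableFiltration X n : MeasurableSpace X)] :=
    fun n => (aav_eq_condexp μ n hk).trans (condExp_congr_ae hkk')
  have hall : ∀ᵐ x ∂μ, ∀ n : ℕ, aav μ n k x
      = (μ[hk.1.mk k | (countableFiltration X n : MeasurableSpace X)]) x := ae_all_iff.mpr hcond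
  filter_upwards [hmart, hall, hkk'] with x hx1 hx2 hx3
  rw [hx3]
  exact hx1.congr fun n => (hx2 n).symm

lemma aav_bdd [IsProbabilityMeasure μ] {k : X → ℝ} (hk : Integrable k μ) {C : NNReal}
    (hC : ∀ᵐ x ∂μ, |k x| ≤ (C:ℝ)) (n : ℕ) : ∀ᵐ x ∂μ, |aav μ n k x| ≤ (C:ℝ) := by
  filter_upwards [aav_eq_condexp μ n hk,
    ae_bdd_condExp_of_ae_bdd (m := (countableFiltration X n : MeasurableSpace X)) hC] with x h1 h2
  rw [h1]; exact h2

lemma holder2 {pr : ℝ} (hpr : 1 ≤ pr) (ν : Measure X) (g : X → ℝ≥0∞) (hg : AEMeasurable g ν) :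
    ∫⁻ x, g x ∂ν ≤ (∫⁻ x, g x ^ pr ∂ν) ^ (1/pr) * (ν Set.univ) ^ (1 - 1/pr) := by
  have hpr0 : 0 < pr := lt_of_lt_of_le one_pos hpr
  have key := ENNReal.lintegral_prod_norm_pow_le (μ := ν) (Finset.univ : Finset Bool)
      (f := fun b x => bif b then g x ^ pr else 1)
      (p := fun b => bif b then 1/pr else 1 - 1/pr)
      (by
        intro b _
        cases b
        · simpa using aemeasurable_const
        · simpa using hg.pow_const pr)
      (by
        rw [Fintype.sum_bool]
        simp only [cond_true, cond_false]
        ring)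
      (by
        intro b _
        cases b
        · simp only [cond_false, sub_nonneg]
          exact div_le_one_of_le₀ hpr (le_of_lt hpr0)
        · simp only [cond_true]
          positivity)
  have hL : ∀ x, ∏ b : Bool, (bif b then g x ^ pr else 1) ^ (bif b then 1/pr else 1 - 1/pr) = g x := by
    intro x
    rw [Fintype.prod_bool]
    simp only [cond_true, cond_false]
    rw [ENNReal.one_rpow, mul_one, ← ENNReal.rpow_mul, mul_one_div, div_self hpr0.ne',
      ENNReal.rpow_one]
  have hR : ∏ b : Bool, (∫⁻ x, (bif b then g x ^ pr else 1) ∂ν) ^ (bif b then 1/pr else 1 - 1/pr)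
      = (∫⁻ x, g x ^ pr ∂ν) ^ (1/pr) * (ν Set.univ) ^ (1 - 1/pr) := by
    rw [Fintype.prod_bool]
    simp only [cond_true, cond_false]
    rw [lintegral_one]
  calc ∫⁻ x, g x ∂ν
      = ∫⁻ x, ∏ b : Bool, (bif b then g x ^ pr else 1) ^ (bif b then 1/pr else 1 - 1/pr) ∂ν := by
        simp_rw [hL]
    _ ≤ _ := key
    _ = _ := hR

lemma holderProd (μ : Measure X) {d : ℕ} {pr : ℝ} (hpr : 1 ≤ pr) (hd : (d:ℝ) ≤ pr)
    [IsProbabilityMeasure μ]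
    (g : Fin d → X → ℝ≥0∞) (hg : ∀ i, AEMeasurable (g i) μ) :
    ∫⁻ x, ∏ i, g i x ∂μ ≤ ∏ i, (∫⁻ x, g i x ^ pr ∂μ) ^ (1/pr) := by
  have hpr0 : 0 < pr := lt_of_lt_of_le one_pos hpr
  have key := ENNReal.lintegral_prod_norm_pow_le (μ := μ) (Finset.univ : Finset (Option (Fin d)))
      (f := fun o x => o.elim 1 (fun i => g i x ^ pr))
      (p := fun o => o.elim (1 - d/pr) (fun _ => 1/pr))
      (by
        rintro (_|i) _
        · simpa using aemeasurable_const
        · simpa using (hg i).pow_const pr)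
      (by
        rw [Fintype.sum_option]
        simp only [Option.elim]
        rw [Finset.sum_const, Finset.card_univ, Fintype.card_fin, nsmul_eq_mul]
        field_simp
        ring)
      (by
        rintro (_|i) _
        · simp only [Option.elim, sub_nonneg]
          exact div_le_one_of_le₀ hd (le_of_lt hpr0)
        · simp only [Option.elim]
          positivity)
  have hL : ∀ x, ∏ o : Option (Fin d), (o.elim 1 (fun i => g i x ^ pr)) ^ (o.elim (1 - d/pr) (fun _ => 1/pr))
      = ∏ i, g i x := by
    intro x
    rw [Fintype.prod_option]
    simp only [Option.elim]
    rw [ENNReal.one_rpow, one_mul]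
    refine Finset.prod_congr rfl fun i _ => ?_
    rw [← ENNReal.rpow_mul, mul_one_div, div_self hpr0.ne', ENNReal.rpow_one]
  have hR : ∏ o : Option (Fin d), (∫⁻ x, o.elim 1 (fun i => g i x ^ pr) ∂μ) ^ (o.elim (1 - d/pr) (fun _ => 1/pr))
      = ∏ i, (∫⁻ x, g i x ^ pr ∂μ) ^ (1/pr) := by
    rw [Fintype.prod_option]
    simp only [Option.elim]
    rw [lintegral_one, measure_univ, ENNReal.one_rpow, one_mul]
  calc ∫⁻ x, ∏ i, g i x ∂μ
      = ∫⁻ x, ∏ o : Option (Fin d), (o.elim 1 (fun i => g i x ^ pr)) ^ (o.elim (1 - d/pr) (fun _ => 1/pr)) ∂μ := by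
        simp_rw [hL]
    _ ≤ _ := key
    _ = _ := hR



lemma aav_lintegral_rpow_le (μ : Measure X) [IsProbabilityMeasure μ]
    {pr : ℝ} (hpr : 1 ≤ pr) (n : ℕ) {k : X → ℝ} (hk : Integrable k μ) :
    ∫⁻ x, (‖aav μ n k x‖₊ : ℝ≥0∞) ^ pr ∂μ ≤ ∫⁻ x, (‖k x‖₊ : ℝ≥0∞) ^ pr ∂μ := by
  have hpr0 : 0 < pr := lt_of_lt_of_le one_pos hpr
  have hsplit : ∀ F : X → ℝ≥0∞, ∫⁻ x, F x ∂μ = ∑ B ∈ part X n, ∫⁻ x in B, F x ∂μ := by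
    intro F
    rw [← setLIntegral_univ F, ← part_biUnion n]
    exact lintegral_biUnion_finset (μ := μ) (t := fun B => B) (part_disj n)
      (fun B hB => part_meas hB) F
  rw [hsplit, hsplit]
  refine Finset.sum_le_sum fun B hB => ?_
  rcases eq_or_ne (μ B) 0 with h0 | h0
  · rw [Measure.restrict_eq_zero.mpr h0]
    simp
  · set v := ((μ B).toReal)⁻¹ * ∫ y in B, k y ∂μ with hv
    have hconst : ∫⁻ x in B, (‖aav μ n k x‖₊ : ℝ≥0∞) ^ pr ∂μ = (‖v‖₊ : ℝ≥0∞) ^ pr * μ B := by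
      rw [setLIntegral_congr_fun (part_meas hB)
          (fun x hx => by rw [aav_on μ n k hB hx]), setLIntegral_const]
    rw [hconst]
    set N := ∫⁻ x in B, (‖k x‖₊ : ℝ≥0∞) ^ pr ∂μ with hN
    set a := μ B with haa
    have hat : a ≠ ⊤ := measure_ne_top μ B
    have hNle : ∫⁻ x in B, (‖k x‖₊ : ℝ≥0∞) ∂μ ≤ N ^ (1/pr) * a ^ (1 - 1/pr) := by
      have := holder2 hpr (μ.restrict B) (fun x => (‖k x‖₊ : ℝ≥0∞)) hk.1.enorm.restrict
      rwa [Measure.restrict_apply_univ] at this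
    have hv1 : (‖v‖₊ : ℝ≥0∞) ≤ a⁻¹ * (N ^ (1/pr) * a ^ (1 - 1/pr)) := by
      have h1 : (‖((μ B).toReal)⁻¹‖₊ : ℝ≥0∞) = a⁻¹ := by
        rw [← enorm_eq_nnnorm, Real.enorm_eq_ofReal (inv_nonneg.mpr ENNReal.toReal_nonneg),
          ENNReal.ofReal_inv_of_pos (ENNReal.toReal_pos h0 hat), ENNReal.ofReal_toReal hat]
      have h2 : (‖∫ y in B, k y ∂μ‖₊ : ℝ≥0∞) ≤ ∫⁻ y in B, (‖k y‖₊ : ℝ≥0∞) ∂μ :=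
        enorm_integral_le_lintegral_enorm _
      calc (‖v‖₊ : ℝ≥0∞) = (‖((μ B).toReal)⁻¹‖₊ : ℝ≥0∞) * (‖∫ y in B, k y ∂μ‖₊ : ℝ≥0∞) := by
            rw [hv, nnnorm_mul, ENNReal.coe_mul]
        _ ≤ a⁻¹ * (N ^ (1/pr) * a ^ (1 - 1/pr)) := by
            rw [h1]
            exact _root_.mul_le_mul_right (h2.trans hNle) _
    have hkey : a⁻¹ * (N ^ (1/pr) * a ^ (1 - 1/pr)) = (N * a⁻¹) ^ (1/pr) := by
      rw [ENNReal.mul_rpow_of_nonneg _ _ (by positivity : (0:ℝ) ≤ 1/pr)]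
      have h3 : a⁻¹ * a ^ (1 - 1/pr) = a⁻¹ ^ (1/pr) := by
        rw [← ENNReal.rpow_neg_one a, ← ENNReal.rpow_add _ _ h0 hat, ← ENNReal.rpow_mul]
        congr 1
        ring
      rw [← h3]
      ring
    have hv2 : (‖v‖₊ : ℝ≥0∞) ≤ (N * a⁻¹) ^ (1/pr) := hkey ▸ hv1
    calc (‖v‖₊ : ℝ≥0∞) ^ pr * a ≤ ((N * a⁻¹) ^ (1/pr)) ^ pr * a :=
          _root_.mul_le_mul_left (ENNReal.rpow_le_rpow hv2 hpr0.le) a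
      _ = (N * a⁻¹) * a := by
          rw [← ENNReal.rpow_mul, one_div, inv_mul_cancel₀ hpr0.ne', ENNReal.rpow_one]
      _ = N * (a⁻¹ * a) := by ring
      _ = N := by rw [ENNReal.inv_mul_cancel h0 hat, mul_one]

lemma integral_prod_aav (μ : Measure X) [IsProbabilityMeasure μ] {d : ℕ}
    (hd : 1 ≤ d) (n : ℕ) (k : Fin d → X → ℝ) :
    ∫ x, ∏ i, aav μ n (k i) x ∂μ
      = ∑ B ∈ part X n, (((μ B).toReal)⁻¹)^(d-1) * ∏ i, ∫ y in B, k i y ∂μ := by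
  have hbd : ∀ (i : Fin d) (x : X),
      |aav μ n (k i) x| ≤ ∑ B ∈ part X n, |((μ B).toReal)⁻¹ * ∫ y in B, k i y ∂μ| := by
    intro i x
    refine (Finset.abs_sum_le_sum_abs _ _).trans (Finset.sum_le_sum fun B hB => ?_)
    by_cases hx : x ∈ B
    · rw [Set.indicator_of_mem hx]
    · rw [Set.indicator_of_notMem hx, abs_zero]
      exact abs_nonneg _
  have hint : Integrable (fun x => ∏ i, aav μ n (k i) x) μ := by
    refine Integrable.mono'
      (integrable_const (∏ i, ∑ B ∈ part X n, |((μ B).toReal)⁻¹ * ∫ y in B, k i y ∂μ|))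
      (Finset.measurable_prod _ fun i _ => aav_measurable μ n (k i)).aestronglyMeasurable
      (ae_of_all μ fun x => ?_)
    rw [Real.norm_eq_abs, Finset.abs_prod]
    exact Finset.prod_le_prod (fun i _ => abs_nonneg _) fun i _ => hbd i x
  rw [← setIntegral_univ, ← part_biUnion n,
    integral_biUnion_finset (part X n) (fun B hB => part_meas hB) (part_disj n)
      (fun B hB => hint.integrableOn)]
  refine Finset.sum_congr rfl fun B hB => ?_
  rcases eq_or_ne (μ B) 0 with h0 | h0
  · have hres := Measure.restrict_eq_zero.mpr h0
    have hz : ∫ y, k ⟨0, hd⟩ y ∂(0 : Measure X) = 0 := integral_zero_measure _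
    rw [hres, integral_zero_measure,
      Finset.prod_eq_zero (Finset.mem_univ (⟨0, hd⟩ : Fin d)) hz, mul_zero]
  · have ha : ((μ B).toReal) ≠ 0 := ENNReal.toReal_ne_zero.mpr ⟨h0, measure_ne_top μ B⟩
    calc ∫ x in B, ∏ i, aav μ n (k i) x ∂μ
        = ∫ _x in B, ∏ i, (((μ B).toReal)⁻¹ * ∫ y in B, k i y ∂μ) ∂μ :=
          setIntegral_congr_fun (part_meas hB)
            (fun x hx => Finset.prod_congr rfl fun i _ => aav_on μ n (k i) hB hx)
      _ = (μ B).toReal • ∏ i, (((μ B).toReal)⁻¹ * ∫ y in B, k i y ∂μ) := setIntegral_const _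
      _ = (((μ B).toReal)⁻¹)^(d-1) * ∏ i, ∫ y in B, k i y ∂μ := by
          obtain ⟨m, hm⟩ : ∃ m, d = m + 1 := ⟨d - 1, (Nat.succ_pred_eq_of_pos hd).symm⟩
          subst hm
          rw [Finset.prod_mul_distrib, Finset.prod_const, Finset.card_univ, Fintype.card_fin,
            smul_eq_mul, ← mul_assoc, Nat.add_sub_cancel]
          congr 1
          rw [pow_succ, mul_comm (((μ B).toReal)⁻¹ ^ m), ← mul_assoc, mul_inv_cancel₀ ha, one_mul]


end PartitionAux

section MainAux

open MeasurableSpace ProbabilityTheory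

variable {X : Type} [MeasurableSpace X]

lemma int_abs_le_norm (ν : Measure X) [IsProbabilityMeasure ν]
    {q : ℝ≥0∞} [Fact (1 ≤ q)] (g : Lp ℝ q ν) : ∫ x, |(g : X → ℝ) x| ∂ν ≤ ‖g‖ := by
  have h1 : ∫ x, |(g : X → ℝ) x| ∂ν = (∫⁻ x, (‖(g : X → ℝ) x‖₊ : ℝ≥0∞) ∂ν).toReal := by
    simp_rw [← Real.norm_eq_abs]
    exact integral_norm_eq_lintegral_enorm (Lp.aestronglyMeasurable g)
  rw [h1, Lp.norm_def]
  simp only [← enorm_eq_nnnorm]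
  rw [← eLpNorm_one_eq_lintegral_enorm]
  exact ENNReal.toReal_mono (Lp.eLpNorm_ne_top g)
    (eLpNorm_le_eLpNorm_of_exponent_le Fact.out (Lp.aestronglyMeasurable g))

end MainAux

/-- Corollary 1: the diagonal restriction operator `D_d` preserves
positivity: if `J_d f ≥ 0` a.e. on `X^d` then `D_d f ≥ 0` a.e. on `X`. -/
theorem statement3
    {X : Type} [MeasurableSpace X] [StandardBorelSpace X]
    (μ : Measure X) [IsProbabilityMeasure μ]
    (d : ℕ) (hd : 1 ≤ d) (p r : ℝ≥0∞) [Fact (1 ≤ p)] [Fact (1 ≤ r)]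
    (hp : (d : ℝ≥0∞) ≤ p) (hp' : p ≠ ∞) (hr : r = p / d)
    (E : Type) [NormedAddCommGroup E] [NormedSpace ℝ E] [CompleteSpace E]
    (tp : ContinuousMultilinearMap ℝ (fun _ : Fin d => Lp ℝ p μ) E)
    (hE : IsPTP μ (fun _ : Fin d => p) E tp)
    (J : E →L[ℝ] Lp ℝ p (pm μ d)) (hJ : IsEmbed μ (fun _ : Fin d => p) p tp J)
    (D : E →L[ℝ] Lp ℝ r μ) (hD : IsDiag μ (fun _ : Fin d => p) r tp D)
    (f : E) (hf : 0 ≤ᵐ[pm μ d] (J f : (Fin d → X) → ℝ)) :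
    0 ≤ᵐ[μ] (D f : X → ℝ) := by
  classical
  have hp1 : (1:ℝ≥0∞) ≤ p := Fact.out
  have hr1 : (1:ℝ≥0∞) ≤ r := Fact.out
  have hpne0 : p ≠ 0 := (lt_of_lt_of_le one_pos hp1).ne'
  set pr : ℝ := p.toReal with hprdef
  have hpr1 : (1:ℝ) ≤ pr := by
    rw [hprdef, ← ENNReal.toReal_one]
    exact ENNReal.toReal_mono hp' hp1
  have hprd : (d:ℝ) ≤ pr := by
    have : ((d : ℝ≥0∞)).toReal = (d:ℝ) := by simp
    rw [hprdef, ← this]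
    exact ENNReal.toReal_mono hp' hp
  let i0 : Fin d := ⟨0, hd⟩
  haveI : Nonempty (Fin d) := ⟨i0⟩
  have hDint : ∀ e : E, Integrable ((D e : X → ℝ)) μ := fun e =>
    (Lp.memLp (D e)).integrable hr1
  have hJint : ∀ e : E, Integrable ((J e : (Fin d → X) → ℝ)) (pm μ d) := fun e =>
    (Lp.memLp (J e)).integrable hp1
  refine ae_nonneg_of_forall_setIntegral_nonneg (hDint f) fun s hs _ => ?_
  -- auxiliary data
  set S : Fin d → Set X := fun i => if i = i0 then s else Set.univ with hSdef
  have hSmeas : ∀ i, MeasurableSet (S i) := by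
    intro i
    simp only [hSdef]
    split_ifs
    exacts [hs, MeasurableSet.univ]
  set kk : (∀ _ : Fin d, Lp ℝ p μ) → Fin d → X → ℝ :=
    fun h i => (S i).indicator ((h i : X → ℝ)) with hkkdef
  have hkk_int : ∀ h i, Integrable (kk h i) μ := fun h i =>
    ((Lp.memLp (h i)).integrable hp1).indicator (hSmeas i)
  set cB : Set X → ℝ := fun B => (((μ B).toReal)⁻¹)^(d-1) with hcBdef
  have hcB_nonneg : ∀ B, 0 ≤ cB B := fun B =>
    pow_nonneg (inv_nonneg.mpr ENNReal.toReal_nonneg) _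
  set wt : ℕ → (Fin d → X) → ℝ := fun n x =>
    ∑ B ∈ part X n, cB B * ∏ i, (B ∩ S i).indicator (fun _ => (1:ℝ)) (x i) with hwtdef
  have hwt_nonneg : ∀ n x, 0 ≤ wt n x := by
    intro n x
    refine Finset.sum_nonneg fun B _ =>
      mul_nonneg (hcB_nonneg B) (Finset.prod_nonneg fun i _ => ?_)
    exact Set.indicator_nonneg (fun _ _ => zero_le_one) _
  have hwt_bdd : ∀ n x, wt n x ≤ ∑ B ∈ part X n, cB B := by
    intro n x
    refine Finset.sum_le_sum fun B _ => ?_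
    have h1 : ∏ i, (B ∩ S i).indicator (fun _ => (1:ℝ)) (x i) ≤ 1 := by
      refine Finset.prod_le_one (fun i _ => Set.indicator_nonneg (fun _ _ => zero_le_one) _)
        (fun i _ => ?_)
      by_cases hxx : x i ∈ B ∩ S i <;> simp [hxx]
    calc cB B * ∏ i, (B ∩ S i).indicator (fun _ => (1:ℝ)) (x i) ≤ cB B * 1 :=
          mul_le_mul_of_nonneg_left h1 (hcB_nonneg B)
      _ = cB B := mul_one _
  have hwt_meas : ∀ n, Measurable (wt n) := by
    intro n
    refine Finset.measurable_sum _ fun B _ => Measurable.const_mul ?_ _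
    refine Finset.measurable_prod _ fun i _ => ?_
    exact (measurable_const.indicator ((part_meas ‹B ∈ part X n›).inter (hSmeas i))).comp
      (measurable_pi_apply i)
  have hwt_int_mul : ∀ (n : ℕ) (e : E),
      Integrable (fun x => wt n x * (J e : (Fin d → X) → ℝ) x) (pm μ d) := by
    intro n e
    refine Integrable.bdd_mul (c := ∑ B ∈ part X n, cB B) (hJint e)
      (hwt_meas n).aestronglyMeasurable (ae_of_all _ fun x => ?_)
    rw [Real.norm_eq_abs, abs_of_nonneg (hwt_nonneg n x)]
    exact hwt_bdd n x
  set ψfun : ℕ → E → ℝ :=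
    fun n e => ∫ x, wt n x * (J e : (Fin d → X) → ℝ) x ∂(pm μ d) with hψdef
  have hψ_add : ∀ n (a b : E), ψfun n (a+b) = ψfun n a + ψfun n b := by
    intro n a b
    simp only [hψdef]
    rw [← integral_add (hwt_int_mul n a) (hwt_int_mul n b)]
    refine integral_congr_ae ?_
    have hab : (J (a+b) : (Fin d → X) → ℝ)
        =ᵐ[pm μ d] (J a : (Fin d → X) → ℝ) + (J b : (Fin d → X) → ℝ) := by
      rw [map_add]
      exact Lp.coeFn_add _ _
    filter_upwards [hab] with x hx
    rw [hx, Pi.add_apply, mul_add]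
  have hψ_smul : ∀ n (c : ℝ) (a : E), ψfun n (c • a) = c * ψfun n a := by
    intro n c a
    simp only [hψdef]
    rw [← integral_const_mul]
    refine integral_congr_ae ?_
    have hca : (J (c • a) : (Fin d → X) → ℝ) =ᵐ[pm μ d] c • (J a : (Fin d → X) → ℝ) := by
      rw [_root_.map_smul]
      exact Lp.coeFn_smul _ _
    filter_upwards [hca] with x hx
    rw [hx, Pi.smul_apply, smul_eq_mul]
    ring
  have hψ_bound : ∀ n (e : E), ‖ψfun n e‖ ≤ ((∑ B ∈ part X n, cB B) * ‖J‖) * ‖e‖ := by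
    intro n e
    have hCn : (0:ℝ) ≤ ∑ B ∈ part X n, cB B := Finset.sum_nonneg fun B _ => hcB_nonneg B
    have step1 : ‖ψfun n e‖
        ≤ ∫ x, (∑ B ∈ part X n, cB B) * |(J e : (Fin d → X) → ℝ) x| ∂(pm μ d) := by
      simp only [hψdef]
      refine (norm_integral_le_integral_norm _).trans ?_
      refine integral_mono (hwt_int_mul n e).norm ((hJint e).abs.const_mul _) fun x => ?_
      rw [Real.norm_eq_abs, abs_mul]
      refine mul_le_mul_of_nonneg_right ?_ (abs_nonneg _)
      rw [abs_of_nonneg (hwt_nonneg n x)]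
      exact hwt_bdd n x
    calc ‖ψfun n e‖ ≤ (∑ B ∈ part X n, cB B) * ∫ x, |(J e : (Fin d → X) → ℝ) x| ∂(pm μ d) :=
          step1.trans (le_of_eq (integral_const_mul _ _))
      _ ≤ (∑ B ∈ part X n, cB B) * ‖J e‖ :=
          mul_le_mul_of_nonneg_left (int_abs_le_norm (pm μ d) (J e)) hCn
      _ ≤ (∑ B ∈ part X n, cB B) * (‖J‖ * ‖e‖) :=
          mul_le_mul_of_nonneg_left (J.le_opNorm e) hCn
      _ = _ := by ring
  set ψ : ℕ → E →L[ℝ] ℝ := fun n =>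
    LinearMap.mkContinuous
      { toFun := ψfun n, map_add' := hψ_add n, map_smul' := hψ_smul n }
      ((∑ B ∈ part X n, cB B) * ‖J‖) (hψ_bound n) with hψCLM
  have hψ_apply : ∀ n e, ψ n e = ψfun n e := fun n e => rfl
  -- Computation of ψ on elementary tensors
  have hK1 : ∀ (n : ℕ) (h : ∀ _ : Fin d, Lp ℝ p μ),
      ψ n (tp h) = ∑ B ∈ part X n, cB B * ∏ i, ∫ y in B, kk h i y ∂μ := by
    intro n h
    letI : MeasureSpace X := ⟨μ⟩
    haveI : SigmaFinite (volume : Measure X) := inferInstanceAs (SigmaFinite μ)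
    have hvol : pm μ d = (volume : Measure (Fin d → X)) := volume_pi.symm
    have hintB : ∀ B ∈ part X n,
        Integrable (fun x : Fin d → X => ∏ i, B.indicator (kk h i) (x i)) (pm μ d) := by
      intro B hB
      rw [hvol]
      exact Integrable.fin_nat_prod fun i => (hkk_int h i).indicator (part_meas hB)
    have step1 : ψ n (tp h)
        = ∫ x, ∑ B ∈ part X n, cB B * ∏ i, B.indicator (kk h i) (x i) ∂(pm μ d) := by
      rw [hψ_apply]
      simp only [hψdef]
      refine integral_congr_ae ?_
      filter_upwards [hJ h] with x hx
      rw [hx]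
      simp only [hwtdef]
      rw [Finset.sum_mul]
      refine Finset.sum_congr rfl fun B hB => ?_
      rw [mul_assoc, ← Finset.prod_mul_distrib]
      congr 1
      refine Finset.prod_congr rfl fun i _ => ?_
      by_cases h1 : x i ∈ B <;> by_cases h2 : x i ∈ S i <;>
        simp [hkkdef, Set.indicator_apply, Set.mem_inter_iff, h1, h2]
    rw [step1, integral_finset_sum _ (fun B hB => (hintB B hB).const_mul _)]
    refine Finset.sum_congr rfl fun B hB => ?_
    rw [integral_const_mul]
    congr 1
    calc ∫ x, ∏ i, B.indicator (kk h i) (x i) ∂(pm μ d)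
        = ∏ i, ∫ y, B.indicator (kk h i) y ∂μ := by
          rw [hvol]
          exact integral_fin_nat_prod_eq_prod _
      _ = ∏ i, ∫ y in B, kk h i y ∂μ :=
          Finset.prod_congr rfl fun i _ => integral_indicator (part_meas hB)
  -- Norm bound
  have hK2 : ∀ (n : ℕ) (h : ∀ _ : Fin d, Lp ℝ p μ), |ψ n (tp h)| ≤ ∏ i, ‖h i‖ := by
    intro n h
    rw [hK1 n h, ← integral_prod_aav μ hd n (kk h)]
    have habs : |∫ x, ∏ i, aav μ n (kk h i) x ∂μ|
        ≤ (∫⁻ x, ∏ i, (‖aav μ n (kk h i) x‖₊ : ℝ≥0∞) ∂μ).toReal := by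
      rw [← Real.norm_eq_abs]
      refine (norm_integral_le_lintegral_norm _).trans (le_of_eq ?_)
      congr 1
      refine lintegral_congr fun x => ?_
      rw [ofReal_norm, enorm_eq_nnnorm, nnnorm_prod, ENNReal.coe_finset_prod]
    have hchain : ∫⁻ x, ∏ i, (‖aav μ n (kk h i) x‖₊ : ℝ≥0∞) ∂μ
        ≤ ∏ i, eLpNorm ((h i : X → ℝ)) p μ := by
      calc ∫⁻ x, ∏ i, (‖aav μ n (kk h i) x‖₊ : ℝ≥0∞) ∂μ
          ≤ ∏ i, (∫⁻ x, (‖aav μ n (kk h i) x‖₊ : ℝ≥0∞) ^ pr ∂μ) ^ (1/pr) :=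
            holderProd μ hpr1 hprd _ fun i =>
              ((aav_measurable μ n (kk h i)).nnnorm.coe_nnreal_ennreal).aemeasurable
        _ ≤ ∏ i, (∫⁻ x, (‖kk h i x‖₊ : ℝ≥0∞) ^ pr ∂μ) ^ (1/pr) :=
            Finset.prod_le_prod' fun i _ =>
              ENNReal.rpow_le_rpow (aav_lintegral_rpow_le μ hpr1 n (hkk_int h i))
                (by positivity)
        _ ≤ ∏ i, (∫⁻ x, (‖(h i : X → ℝ) x‖₊ : ℝ≥0∞) ^ pr ∂μ) ^ (1/pr) := by
            refine Finset.prod_le_prod' fun i _ =>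
              ENNReal.rpow_le_rpow (lintegral_mono fun x => ?_) (by positivity)
            refine ENNReal.rpow_le_rpow ?_ (le_trans zero_le_one hpr1)
            simp only [hkkdef]
            rw [ENNReal.coe_le_coe]
            by_cases hxx : x ∈ S i
            · rw [Set.indicator_of_mem hxx]
            · rw [Set.indicator_of_notMem hxx]
              simp
        _ = ∏ i, eLpNorm ((h i : X → ℝ)) p μ := by
            refine Finset.prod_congr rfl fun i _ => ?_
            rw [eLpNorm_eq_lintegral_rpow_enorm_toReal hpne0 hp']
            rfl
    have hne : ∏ i, eLpNorm ((h i : X → ℝ)) p μ ≠ ⊤ :=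
      ENNReal.prod_ne_top fun i _ => Lp.eLpNorm_ne_top (h i)
    calc |∫ x, ∏ i, aav μ n (kk h i) x ∂μ|
        ≤ (∫⁻ x, ∏ i, (‖aav μ n (kk h i) x‖₊ : ℝ≥0∞) ∂μ).toReal := habs
      _ ≤ (∏ i, eLpNorm ((h i : X → ℝ)) p μ).toReal := ENNReal.toReal_mono hne hchain
      _ = ∏ i, ‖h i‖ := by
          rw [ENNReal.toReal_prod]
          exact Finset.prod_congr rfl fun i _ => (Lp.norm_def (h i)).symm
  -- uniform norm bound via the lifting property
  have hψnorm : ∀ (n : ℕ) (e : E), |ψ n e| ≤ ‖e‖ := by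
    intro n e
    obtain ⟨L, hL1, hL2⟩ := hE.lift ℝ ((ψ n).compContinuousMultilinearMap tp)
    have hLψ : ψ n = L := by
      refine ContinuousLinearMap.ext_on hE.denseSpan ?_
      rintro x ⟨h, rfl⟩
      exact (hL1 h).symm
    have hMle : ‖(ψ n).compContinuousMultilinearMap tp‖ ≤ 1 := by
      refine ContinuousMultilinearMap.opNorm_le_bound zero_le_one fun h => ?_
      rw [one_mul]
      exact (Real.norm_eq_abs _) ▸ hK2 n h
    rw [hLψ, ← Real.norm_eq_abs]
    refine (L.le_opNorm e).trans ?_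
    rw [hL2]
    exact mul_le_of_le_one_left (norm_nonneg e) hMle
  -- positivity of ψ n f
  have hψpos : ∀ n : ℕ, 0 ≤ ψ n f := by
    intro n
    rw [hψ_apply]
    simp only [hψdef]
    refine integral_nonneg_of_ae ?_
    filter_upwards [hf] with x hx
    exact mul_nonneg (hwt_nonneg n x) (by simpa using hx)
  -- the target functional
  set Φ : E → ℝ := fun e => ∫ x in s, (D e : X → ℝ) x ∂μ with hΦdef
  have hΦ_le : ∀ e : E, |Φ e| ≤ ‖e‖ := by
    intro e
    have h1 : |Φ e| ≤ ∫ x, |(D e : X → ℝ) x| ∂μ := by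
      simp only [hΦdef, ← Real.norm_eq_abs]
      refine (norm_integral_le_integral_norm _).trans ?_
      simp_rw [Real.norm_eq_abs]
      exact setIntegral_le_integral (hDint e).abs (ae_of_all _ fun x => abs_nonneg _)
    refine h1.trans ?_
    refine (int_abs_le_norm μ (D e)).trans ?_
    refine (D.le_opNorm e).trans ?_
    rw [hD.1, one_mul]
  have hDsub : ∀ a b : E, (D (a - b) : X → ℝ)
      =ᵐ[μ] fun x => (D a : X → ℝ) x - (D b : X → ℝ) x := by
    intro a b
    rw [_root_.map_sub]
    exact Lp.coeFn_sub _ _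
  have hΦ_sub : ∀ a b : E, Φ (a - b) = Φ a - Φ b := by
    intro a b
    simp only [hΦdef]
    rw [← integral_sub ((hDint a).integrableOn) ((hDint b).integrableOn)]
    exact integral_congr_ae (ae_restrict_of_ae (hDsub a b))
  have hΦ_add : ∀ a b : E, Φ (a + b) = Φ a + Φ b := by
    intro a b
    simp only [hΦdef]
    rw [← integral_add ((hDint a).integrableOn) ((hDint b).integrableOn)]
    refine integral_congr_ae (ae_restrict_of_ae ?_)
    have : (D (a + b) : X → ℝ) =ᵐ[μ] (D a : X → ℝ) + (D b : X → ℝ) := by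
      rw [map_add]
      exact Lp.coeFn_add _ _
    filter_upwards [this] with x hx
    simpa using hx
  have hΦ_smul : ∀ (c : ℝ) (a : E), Φ (c • a) = c * Φ a := by
    intro c a
    simp only [hΦdef]
    rw [← integral_const_mul]
    refine integral_congr_ae (ae_restrict_of_ae ?_)
    have : (D (c • a) : X → ℝ) =ᵐ[μ] c • (D a : X → ℝ) := by
      rw [_root_.map_smul]
      exact Lp.coeFn_smul _ _
    filter_upwards [this] with x hx
    simpa using hx
  have hΦ0 : Φ 0 = 0 := by
    rw [← zero_smul ℝ (0:E), hΦ_smul, zero_mul]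
  -- dense subset of bounded elementary tensors
  set Bset : Fin d → Set (Lp ℝ p μ) :=
    fun _ => {u : Lp ℝ p μ | ∃ C : NNReal, ∀ᵐ x ∂μ, |(u : X → ℝ) x| ≤ (C:ℝ)} with hBdef
  set Sbdd : Set E := (fun h : ∀ _ : Fin d, Lp ℝ p μ => tp h) '' (Set.pi Set.univ Bset)
    with hSbdddef
  have hdense : Dense (Submodule.span ℝ Sbdd : Set E) := by
    have hBd : ∀ i, Dense (Bset i) := by
      intro i
      refine (Lp.simpleFunc.denseRange (p := p) (E := ℝ) (μ := μ) hp').mono ?_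
      rintro _ ⟨q, rfl⟩
      obtain ⟨C, hC⟩ := (Lp.simpleFunc.toSimpleFunc q).exists_forall_norm_le
      refine ⟨C.toNNReal, ?_⟩
      filter_upwards [Lp.simpleFunc.toSimpleFunc_eq_toFun q] with x hx
      rw [← hx, ← Real.norm_eq_abs]
      exact (hC x).trans (Real.le_coe_toNNReal C)
    have hPid : Dense (Set.pi Set.univ Bset) := dense_pi Set.univ fun i _ => hBd i
    have hsub : Set.range (fun h : ∀ _ : Fin d, Lp ℝ p μ => tp h)
        ⊆ closure (Submodule.span ℝ Sbdd : Set E) := by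
      rintro _ ⟨h, rfl⟩
      have h1 : tp h ∈ closure ((fun g : ∀ _ : Fin d, Lp ℝ p μ => tp g) '' (Set.pi Set.univ Bset)) :=
        mem_closure_image tp.cont.continuousAt (hPid h)
      refine closure_mono ?_ h1
      rw [hSbdddef]
      exact Submodule.subset_span
    have h2 : (Submodule.span ℝ (Set.range fun h : ∀ _ : Fin d, Lp ℝ p μ => tp h) : Set E)
        ⊆ closure (Submodule.span ℝ Sbdd : Set E) := by
      have h3 : Submodule.span ℝ (Set.range fun h : ∀ _ : Fin d, Lp ℝ p μ => tp h)
          ≤ (Submodule.span ℝ Sbdd).topologicalClosure := by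
        rw [Submodule.span_le]
        intro x hx
        exact hsub hx
      intro x hx
      exact h3 hx
    intro x
    exact closure_minimal h2 isClosed_closure (hE.denseSpan x)
  -- convergence on the span
  have hconv : ∀ u ∈ Submodule.span ℝ Sbdd, Tendsto (fun n => ψ n u) atTop (𝓝 (Φ u)) := by
    intro u hu
    induction hu using Submodule.span_induction with
    | mem x hx =>
      obtain ⟨h, hhB, rfl⟩ := hx
      have hhB' : ∀ i, ∃ C : NNReal, ∀ᵐ x ∂μ, |(h i : X → ℝ) x| ≤ (C:ℝ) := fun i =>
        hhB i (Set.mem_univ i)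
      choose C hC using hhB'
      have hkbdd : ∀ i, ∀ᵐ x ∂μ, |kk h i x| ≤ (C i : ℝ) := by
        intro i
        filter_upwards [hC i] with x hx
        simp only [hkkdef]
        refine le_trans ?_ hx
        by_cases hxx : x ∈ S i
        · rw [Set.indicator_of_mem hxx]
        · rw [Set.indicator_of_notMem hxx, abs_zero]
          exact abs_nonneg _
      have hψeq : ∀ n : ℕ, ψ n (tp h) = ∫ x, ∏ i, aav μ n (kk h i) x ∂μ := by
        intro n
        rw [hK1 n h, ← integral_prod_aav μ hd n (kk h)]
      have hΦh : Φ (tp h) = ∫ x, ∏ i, kk h i x ∂μ := by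
        simp only [hΦdef]
        have hDh : ∫ x in s, (D (tp h) : X → ℝ) x ∂μ = ∫ x in s, ∏ i, (h i : X → ℝ) x ∂μ :=
          integral_congr_ae (ae_restrict_of_ae (hD.2 h))
        rw [hDh, ← integral_indicator hs]
        refine integral_congr_ae (ae_of_all _ fun x => ?_)
        by_cases hx : x ∈ s
        · rw [Set.indicator_of_mem hx]
          refine Finset.prod_congr rfl fun i _ => ?_
          simp only [hkkdef, hSdef]
          split_ifs with hi
          · rw [Set.indicator_of_mem hx]
          · rw [Set.indicator_univ]
        · rw [Set.indicator_of_notMem hx]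
          refine (Finset.prod_eq_zero (Finset.mem_univ i0) ?_).symm
          simp only [hkkdef, hSdef, eq_self_iff_true, if_true]
          rw [Set.indicator_of_notMem hx]
      rw [hΦh]
      have hψeq' : (fun n => ψ n (tp h)) = fun n => ∫ x, ∏ i, aav μ n (kk h i) x ∂μ :=
        funext hψeq
      rw [hψeq']
      refine tendsto_integral_of_dominated_convergence (fun _ => ∏ i, (C i : ℝ))
        (fun n => (Finset.measurable_prod _ fun i _ =>
          aav_measurable μ n (kk h i)).aestronglyMeasurable)
        (integrable_const _) (fun n => ?_) ?_
      · filter_upwards [ae_all_iff.mpr fun i => aav_bdd μ (hkk_int h i) (hkbdd i) n]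
          with x hx
        rw [Real.norm_eq_abs, Finset.abs_prod]
        exact Finset.prod_le_prod (fun i _ => abs_nonneg _) fun i _ => hx i
      · filter_upwards [ae_all_iff.mpr fun i => aav_tendsto μ (hkk_int h i)] with x hx
        exact tendsto_finset_prod _ fun i _ => hx i
    | zero =>
      simp only [map_zero, hΦ0]
      exact tendsto_const_nhds
    | add x y hx hy ihx ihy =>
      simp only [map_add, hΦ_add]
      exact ihx.add ihy
    | smul c x hx ih =>
      simp only [_root_.map_smul, hΦ_smul, smul_eq_mul]
      exact ih.const_mul c
  -- final ε-argument
  show (0:ℝ) ≤ Φ f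
  refine le_of_forall_pos_le_add fun ε hε => ?_
  obtain ⟨u, huspan, hufu⟩ : ∃ u ∈ Submodule.span ℝ Sbdd, ‖f - u‖ < ε/3 := by
    have hcl := hdense f
    rw [Metric.mem_closure_iff] at hcl
    obtain ⟨u, hu1, hu2⟩ := hcl (ε/3) (by positivity)
    exact ⟨u, hu1, by rwa [dist_eq_norm] at hu2⟩
  obtain ⟨N, hN⟩ := Metric.tendsto_atTop.mp (hconv u huspan) (ε/3) (by positivity)
  have h1 := hN N le_rfl
  rw [Real.dist_eq] at h1
  have h2 : |ψ N u - ψ N f| ≤ ε/3 := by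
    rw [← _root_.map_sub]
    refine (hψnorm N (u - f)).trans ?_
    rw [norm_sub_rev]
    exact le_of_lt hufu
  have h3 : |Φ f - Φ u| ≤ ε/3 := by
    rw [← hΦ_sub]
    exact (hΦ_le (f - u)).trans (le_of_lt hufu)
  have h4 : (0:ℝ) ≤ ψ N f := hψpos N
  have e1 := abs_le.mp h2
  have e2 := abs_le.mp h3
  have e3 := abs_lt.mp h1
  linarith [e1.1, e1.2, e2.1, e2.2, e3.1, e3.2]


end VonMises
end
end

section
/- Let T be a measure preserving transformation of (X,𝓕,μ) and let g^∅ ∈ L_{2,π}^{sym}(μ²) satisfy E(g^∅ | T^{−(0,1)}𝓕^{⊗2}) = 0, with eigenfunction expansion g^∅(x_1,x_2) = Σ_{l=1}^{∞} λ_l φ_l(x_1) φ_l(x_2), where (φ_l) is an orthonormal sequence in L_2(μ) and Σ_l |λ_l| < ∞. Then for every m with λ_m ≠ 0, the eigenfunction φ_m satisfies E(φ_m | T^{−1}𝓕) = 0 μ-almost surely. -/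
open MeasureTheory Filter Topology ENNReal ProbabilityTheory

noncomputable section

namespace VonMises

variable {X : Type} [MeasurableSpace X]

local notation "⟪" x ", " y "⟫" => @inner ℝ _ _ x y

private lemma measurePreserving_two (μ : Measure X) [IsProbabilityMeasure μ] :
    MeasurePreserving (MeasurableEquiv.finTwoArrow (α := X))
      (pm μ 2) (μ.prod μ) := by
  refine ⟨(MeasurableEquiv.finTwoArrow (α := X)).measurable, ?_⟩
  refine (Measure.prod_eq fun s t hs ht => ?_).symm
  rw [MeasurableEquiv.map_apply]
  have hpre : (MeasurableEquiv.finTwoArrow (α := X)) ⁻¹' (s ×ˢ t)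
      = Set.univ.pi ![s, t] := by
    ext x
    simp [MeasurableEquiv.finTwoArrow, Fin.forall_fin_two]
  rw [hpre, Measure.pi_pi]
  simp [Fin.prod_univ_two]

private lemma integral_two (μ : Measure X) [IsProbabilityMeasure μ] (F G : X → ℝ) :
    ∫ x : Fin 2 → X, F (x 0) * G (x 1) ∂pm μ 2 = (∫ x, F x ∂μ) * ∫ x, G x ∂μ := by
  have h := (measurePreserving_two μ).integral_comp
    (MeasurableEquiv.finTwoArrow (α := X)).measurableEmbedding
    (fun p : X × X => F p.1 * G p.2)
  rw [← integral_prod_mul F G, ← h]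
  rfl

private lemma setIntegral_rect (μ : Measure X) [IsProbabilityMeasure μ] (F G : X → ℝ)
    {A C : Set X} (hA : MeasurableSet A) (hC : MeasurableSet C) :
    ∫ x in (fun x : Fin 2 → X => x 0) ⁻¹' A ∩ (fun x : Fin 2 → X => x 1) ⁻¹' C,
        F (x 0) * G (x 1) ∂pm μ 2
      = (∫ x in A, F x ∂μ) * ∫ x in C, G x ∂μ := by
  have hs : MeasurableSet ((fun x : Fin 2 → X => x 0) ⁻¹' A ∩ (fun x : Fin 2 → X => x 1) ⁻¹' C) :=
    ((measurable_pi_apply 0) hA).inter ((measurable_pi_apply 1) hC)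
  rw [← integral_indicator hs]
  have hind : Set.indicator
        ((fun x : Fin 2 → X => x 0) ⁻¹' A ∩ (fun x : Fin 2 → X => x 1) ⁻¹' C)
        (fun x : Fin 2 → X => F (x 0) * G (x 1))
      = fun x : Fin 2 → X => A.indicator F (x 0) * C.indicator G (x 1) := by
    funext x
    by_cases h0 : x 0 ∈ A <;> by_cases h1 : x 1 ∈ C <;>
      simp [Set.indicator, h0, h1]
  rw [hind, integral_two μ, integral_indicator hA, integral_indicator hC]

/-- if a symmetric kernel `g^∅ ∈ L_{2,π}^{sym}(μ²)` with eigenfunction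
expansion `g^∅ = Σ_l λ_l φ_l ⊗ φ_l` satisfies `E(g^∅ | T^{−(0,1)}𝓕^{⊗2}) = 0`, then each
eigenfunction with `λ_m ≠ 0` is a reversed martingale difference:
`E(φ_m | T^{−1}𝓕) = 0` a.e. -/
theorem statement19
    {X : Type} [MeasurableSpace X] [StandardBorelSpace X]
    (μ : Measure X) [IsProbabilityMeasure μ]
    (T : X → X) (hT : MeasurePreserving T μ μ)
    (E : Type) [NormedAddCommGroup E] [NormedSpace ℝ E] [CompleteSpace E]
    (tp : ContinuousMultilinearMap ℝ (fun _ : Fin 2 => Lp ℝ 2 μ) E)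
    (hE : IsPTP μ (fun _ : Fin 2 => (2 : ℝ≥0∞)) E tp)
    (J : E →L[ℝ] Lp ℝ 2 (pm μ 2))
    (hJ : IsEmbed μ (fun _ : Fin 2 => (2 : ℝ≥0∞)) 2 tp J)
    (g0 : E)
    (hsym : Symm μ 2 (J g0 : (Fin 2 → X) → ℝ))
    (hmart : (pm μ 2)[(J g0 : (Fin 2 → X) → ℝ) |
        MeasurableSpace.comap (fun x : Fin 2 → X => ![x 0, T (x 1)]) inferInstance]
      =ᵐ[pm μ 2] 0)
    -- the eigenfunction expansion `g0 = Σ_l λ_l φ_l ⊗ φ_l`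
    (lam : ℕ → ℝ) (φ : ℕ → Lp ℝ 2 μ)
    (hON : Orthonormal ℝ φ)
    (habs : Summable fun l => |lam l|)
    (P : ℕ → Lp ℝ 2 (pm μ 2))
    (hP : ∀ l, (P l : (Fin 2 → X) → ℝ) =ᵐ[pm μ 2]
      fun x => (φ l : X → ℝ) (x 0) * (φ l : X → ℝ) (x 1))
    (hexp : HasSum (fun l => lam l • P l) (J g0)) :
    ∀ m : ℕ, lam m ≠ 0 →
      μ[(φ m : X → ℝ) | MeasurableSpace.comap T inferInstance] =ᵐ[μ] 0 := by
  intro m hlm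
  have hTm : Measurable T := hT.measurable
  have hleT : MeasurableSpace.comap T inferInstance ≤ ‹MeasurableSpace X› := hTm.comap_le
  -- the key claim: set integrals of φ m over sets T⁻¹ B vanish
  have key : ∀ B : Set X, MeasurableSet B → ∫ x in T ⁻¹' B, (φ m : X → ℝ) x ∂μ = 0 := by
    intro B hB
    have hC : MeasurableSet (T ⁻¹' B) := hTm hB
    set C := T ⁻¹' B with hCdef
    set b : ℕ → ℝ := fun l => ∫ x in C, (φ l : X → ℝ) x ∂μ with hbdef
    set χC : Lp ℝ 2 μ := indicatorConstLp 2 hC (measure_ne_top μ C) (1 : ℝ) with hχCdef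
    have hχC : ∀ l, ⟪χC, φ l⟫ = b l := fun l =>
      L2.inner_indicatorConstLp_one hC (measure_ne_top μ C) (φ l)
    have hbb : ∀ l, |b l| ≤ ‖χC‖ := by
      intro l
      rw [← hχC l]
      calc |⟪χC, φ l⟫| ≤ ‖χC‖ * ‖φ l‖ := abs_real_inner_le_norm _ _
        _ = ‖χC‖ := by rw [hON.1 l, mul_one]
    -- the series Σ (lam l * b l) • φ l converges
    have hsum : Summable fun l => (lam l * b l) • φ l := by
      refine Summable.of_norm_bounded (habs.mul_right ‖χC‖) ?_
      intro l
      rw [norm_smul, hON.1 l, mul_one, Real.norm_eq_abs, abs_mul]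
      exact mul_le_mul_of_nonneg_left (hbb l) (abs_nonneg _)
    set u : Lp ℝ 2 μ := ∑' l, (lam l * b l) • φ l with hudef
    have hu : HasSum (fun l => (lam l * b l) • φ l) u := hsum.hasSum
    -- from the martingale condition: rectangle sums vanish
    have hzero : ∀ A : Set X, MeasurableSet A →
        HasSum (fun l => (lam l * b l) * ∫ x in A, (φ l : X → ℝ) x ∂μ) 0 := by
      intro A hA
      set s := (fun x : Fin 2 → X => x 0) ⁻¹' A ∩ (fun x : Fin 2 → X => x 1) ⁻¹' C with hsdef
      have hs : MeasurableSet s :=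
        ((measurable_pi_apply 0) hA).inter ((measurable_pi_apply 1) hC)
      have hm2 : Measurable fun x : Fin 2 → X => ![x 0, T (x 1)] := by
        rw [measurable_pi_iff]
        intro i
        fin_cases i
        · simpa using measurable_pi_apply 0
        · simpa [Function.comp_def] using hTm.comp (measurable_pi_apply 1)
      have hle2 : MeasurableSpace.comap (fun x : Fin 2 → X => ![x 0, T (x 1)]) inferInstance
          ≤ MeasurableSpace.pi := hm2.comap_le
      have hsm : MeasurableSet[MeasurableSpace.comap
          (fun x : Fin 2 → X => ![x 0, T (x 1)]) inferInstance] s := by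
        refine ⟨(fun y : Fin 2 → X => y 0) ⁻¹' A ∩ (fun y : Fin 2 → X => y 1) ⁻¹' B,
          ((measurable_pi_apply 0) hA).inter ((measurable_pi_apply 1) hB), ?_⟩
        ext x
        simp [hsdef, hCdef]
      have hint : Integrable (J g0 : (Fin 2 → X) → ℝ) (pm μ 2) :=
        (Lp.memLp (J g0)).integrable one_le_two
      have hIz : ∫ x in s, (J g0 : (Fin 2 → X) → ℝ) x ∂pm μ 2 = 0 := by
        rw [← setIntegral_condExp hle2 hint hsm,
          setIntegral_congr_ae hs (hmart.mono fun x hx _ => hx)]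
        simp
      set χ : Lp ℝ 2 (pm μ 2) := indicatorConstLp 2 hs (measure_ne_top _ s) (1 : ℝ) with hχdef
      have h1 : HasSum (fun l => ⟪χ, lam l • P l⟫) ⟪χ, J g0⟫ :=
        (innerSL ℝ χ).hasSum hexp
      have h2 : ⟪χ, J g0⟫ = 0 := by
        rw [L2.inner_indicatorConstLp_one hs (measure_ne_top _ s) (J g0)]
        exact hIz
      have h3 : ∀ l, ⟪χ, lam l • P l⟫
          = (lam l * b l) * ∫ x in A, (φ l : X → ℝ) x ∂μ := by
        intro l
        rw [real_inner_smul_right, L2.inner_indicatorConstLp_one hs (measure_ne_top _ s) (P l)]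
        have : ∫ x in s, (P l : (Fin 2 → X) → ℝ) x ∂pm μ 2
            = ∫ x in s, (φ l : X → ℝ) (x 0) * (φ l : X → ℝ) (x 1) ∂pm μ 2 :=
          integral_congr_ae (ae_restrict_of_ae (hP l))
        rw [this, hsdef, setIntegral_rect μ _ _ hA hC]
        ring
      rw [h2] at h1
      convert h1 using 1
      exact funext fun l => (h3 l).symm
    -- hence all set integrals of u vanish, so u = 0 a.e.
    have hintu : ∀ A : Set X, MeasurableSet A → ∫ x in A, (u : X → ℝ) x ∂μ = 0 := by
      intro A hA
      have hχA : ⟪(indicatorConstLp 2 hA (measure_ne_top μ A) (1 : ℝ)), u⟫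
          = ∫ x in A, (u : X → ℝ) x ∂μ :=
        L2.inner_indicatorConstLp_one hA (measure_ne_top μ A) u
      rw [← hχA]
      have h4 : HasSum (fun l => ⟪(indicatorConstLp 2 hA (measure_ne_top μ A) (1 : ℝ)),
          (lam l * b l) • φ l⟫)
          ⟪(indicatorConstLp 2 hA (measure_ne_top μ A) (1 : ℝ)), u⟫ :=
        (innerSL ℝ _).hasSum hu
      have h5 : ∀ l, ⟪(indicatorConstLp 2 hA (measure_ne_top μ A) (1 : ℝ)),
          (lam l * b l) • φ l⟫ = (lam l * b l) * ∫ x in A, (φ l : X → ℝ) x ∂μ := by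
        intro l
        rw [real_inner_smul_right, L2.inner_indicatorConstLp_one hA (measure_ne_top μ A) (φ l)]
      have h6 : HasSum (fun l => (lam l * b l) * ∫ x in A, (φ l : X → ℝ) x ∂μ)
          ⟪(indicatorConstLp 2 hA (measure_ne_top μ A) (1 : ℝ)), u⟫ := by
        convert h4 using 1
        exact funext fun l => (h5 l).symm
      exact (h6.unique (hzero A hA)).symm ▸ rfl
    have huz : (u : X → ℝ) =ᵐ[μ] 0 := by
      refine Integrable.ae_eq_zero_of_forall_setIntegral_eq_zero
        ((Lp.memLp u).integrable one_le_two) fun A hA _ => hintu A hA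
    -- compute ⟪φ m, u⟫ two ways
    have hinz : ⟪φ m, u⟫ = 0 := by
      rw [L2.inner_def]
      rw [integral_congr_ae (g := fun _ => (0 : ℝ)) (huz.mono fun a ha => by
        simp only [ha, Pi.zero_apply, inner_zero_right])]
      simp
    have h7 : HasSum (fun l => (lam l * b l) * ⟪φ m, φ l⟫) ⟪φ m, u⟫ := by
      have := (innerSL ℝ (φ m)).hasSum hu
      simp only [innerSL_apply_apply, real_inner_smul_right] at this
      exact this
    have h8 : HasSum (fun l => (lam l * b l) * ⟪φ m, φ l⟫) (lam m * b m) := by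
      have hite : (fun l => (lam l * b l) * ⟪φ m, φ l⟫)
          = fun l => if l = m then lam m * b m else 0 := by
        funext l
        rw [orthonormal_iff_ite.mp hON m l]
        by_cases h : l = m
        · subst h; simp
        · rw [if_neg h, if_neg fun hh => h hh.symm, mul_zero]
      rw [hite]
      exact hasSum_ite_eq m (lam m * b m)
    have : lam m * b m = 0 := (h8.unique h7).trans hinz
    have hbm : b m = 0 := by
      rcases mul_eq_zero.mp this with h | h
      · exact absurd h hlm
      · exact h
    exact hbm
  -- conclude via the characterization of conditional expectation
  have hfint : Integrable ((φ m : X → ℝ)) μ := (Lp.memLp (φ m)).integrable one_le_two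
  refine (ae_eq_condExp_of_forall_setIntegral_eq hleT hfint
    (fun s _ _ => integrableOn_zero) (fun s hs _ => ?_) ?_).symm
  · obtain ⟨B, hB, rfl⟩ := hs
    simp [key B hB]
  · exact StronglyMeasurable.aestronglyMeasurable
      (@stronglyMeasurable_zero X ℝ (MeasurableSpace.comap T inferInstance) _ _)

end VonMises
end
end
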